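/- When α = 1, the combine-and-cluster and cluster-and-combine ultrametrics coincide and both equal single linkage applied to the upper bounds: u^CL(x,x') = u^CO(x,x') = c̄(x,x') for all x, x'. -/

import Mathlib

/-- The cost of a chain (list of nodes): maximum dissimilarity over consecutive links. -/
def chainCost {X : Type*} (d : X → X → ℝ) : List X → ℝ
  | [] => 0
  | [_] => 0
  | a :: b :: l => max (d a b) (chainCost d (b :: l))

/-- The minimum chain cost between `x` and `x'`: infimum of costs of chains from `x` to `x'`. -/
noncomputable def minChainCost {X : Type*} (d : X → X → ℝ) (x x' : X) : ℝ :=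
  sInf { c | ∃ l : List X, l.head? = some x ∧ l.getLast? = some x' ∧ chainCost d l = c }

/-- Combine-and-cluster ultrametric. -/
noncomputable def uCO {X : Type*} (dlb dub : X → X → ℝ) (α : ℝ) : X → X → ℝ :=
  minChainCost (fun a b => α * dub a b + (1 - α) * dlb a b)

/-- Cluster-and-combine ultrametric. -/
noncomputable def uCL {X : Type*} (dlb dub : X → X → ℝ) (α : ℝ) : X → X → ℝ :=
  minChainCost (fun a b => α * minChainCost dub a b + (1 - α) * minChainCost dlb a b)

section Aux

variable {X : Type*}

lemma chainCost_nonneg (d : X → X → ℝ) (hd : ∀ a b, 0 ≤ d a b) :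
    ∀ l : List X, 0 ≤ chainCost d l
  | [] => le_refl 0
  | [_] => le_refl 0
  | a :: b :: l => le_trans (hd a b) (le_max_left _ _)

lemma chainSet_nonempty (d : X → X → ℝ) (x x' : X) :
    {c | ∃ l : List X, l.head? = some x ∧ l.getLast? = some x' ∧ chainCost d l = c}.Nonempty :=
  ⟨chainCost d [x, x'], [x, x'], rfl, rfl, rfl⟩

lemma chainSet_bddBelow (d : X → X → ℝ) (hd : ∀ a b, 0 ≤ d a b) (x x' : X) :
    BddBelow {c | ∃ l : List X, l.head? = some x ∧ l.getLast? = some x' ∧ chainCost d l = c} := by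
  refine ⟨0, ?_⟩
  rintro c ⟨l, -, -, rfl⟩
  exact chainCost_nonneg d hd l

lemma minChainCost_le_chain (d : X → X → ℝ) (hd : ∀ a b, 0 ≤ d a b) {x x' : X} {l : List X}
    (h1 : l.head? = some x) (h2 : l.getLast? = some x') :
    minChainCost d x x' ≤ chainCost d l :=
  csInf_le (chainSet_bddBelow d hd x x') ⟨l, h1, h2, rfl⟩

lemma minChainCost_nonneg (d : X → X → ℝ) (hd : ∀ a b, 0 ≤ d a b) (x x' : X) :
    0 ≤ minChainCost d x x' := by
  apply le_csInf (chainSet_nonempty d x x')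
  rintro c ⟨l, -, -, rfl⟩
  exact chainCost_nonneg d hd l

lemma minChainCost_le_d (d : X → X → ℝ) (hd : ∀ a b, 0 ≤ d a b) (x x' : X) :
    minChainCost d x x' ≤ d x x' := by
  have h := minChainCost_le_chain d hd (l := [x, x']) rfl rfl
  simpa [chainCost, max_eq_left (hd x x')] using h

lemma minChainCost_self (d : X → X → ℝ) (hd : ∀ a b, 0 ≤ d a b) (x : X) :
    minChainCost d x x = 0 := by
  have h := minChainCost_le_chain d hd (l := [x]) rfl rfl
  simp only [chainCost] at h
  exact le_antisymm h (minChainCost_nonneg d hd x x)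

lemma chainCost_append (d : X → X → ℝ) (hd : ∀ a b, 0 ≤ d a b) (hdd : ∀ a, d a a = 0) :
    ∀ (l1 l2 : List X) (y : X), l1.getLast? = some y → l2.head? = some y →
      chainCost d (l1 ++ l2) ≤ max (chainCost d l1) (chainCost d l2)
  | [], _, _, h, _ => by simp at h
  | [a], l2, y, h, h2 => by
    simp only [List.getLast?_singleton, Option.some.injEq] at h
    subst h
    match l2, h2 with
    | b :: t, h2 =>
      simp only [List.head?_cons, Option.some.injEq] at h2
      subst h2
      simp only [List.singleton_append, chainCost, hdd]
      exact max_le (le_max_of_le_right (chainCost_nonneg d hd _)) (le_max_right _ _)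
  | a :: b :: t, l2, y, h, h2 => by
    have hlast : (b :: t).getLast? = some y := by
      rw [List.getLast?_cons_cons] at h; exact h
    have ih := chainCost_append d hd hdd (b :: t) l2 y hlast h2
    have : chainCost d ((a :: b :: t) ++ l2) = max (d a b) (chainCost d ((b :: t) ++ l2)) := rfl
    rw [this]
    calc max (d a b) (chainCost d ((b :: t) ++ l2))
        ≤ max (d a b) (max (chainCost d (b :: t)) (chainCost d l2)) := by
          exact max_le_max le_rfl ih
      _ = max (max (d a b) (chainCost d (b :: t))) (chainCost d l2) := (max_assoc _ _ _).symm
      _ = max (chainCost d (a :: b :: t)) (chainCost d l2) := rfl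

lemma minChainCost_ultra (d : X → X → ℝ) (hd : ∀ a b, 0 ≤ d a b) (hdd : ∀ a, d a a = 0)
    (x y z : X) :
    minChainCost d x z ≤ max (minChainCost d x y) (minChainCost d y z) := by
  refine le_of_forall_pos_le_add fun ε hε => ?_
  obtain ⟨c1, ⟨l1, h11, h12, rfl⟩, hc1⟩ := Real.lt_sInf_add_pos (chainSet_nonempty d x y) hε
  obtain ⟨c2, ⟨l2, h21, h22, rfl⟩, hc2⟩ := Real.lt_sInf_add_pos (chainSet_nonempty d y z) hε
  have hl1ne : l1 ≠ [] := by rintro rfl; simp at h11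
  have hl2ne : l2 ≠ [] := by rintro rfl; simp at h21
  have hhead : (l1 ++ l2).head? = some x := by
    rw [List.head?_append_of_ne_nil _ hl1ne, h11]
  have hlast : (l1 ++ l2).getLast? = some z := by
    rw [List.getLast?_append_of_ne_nil l1 hl2ne, h22]
  have h1 : minChainCost d x z ≤ chainCost d (l1 ++ l2) :=
    minChainCost_le_chain d hd hhead hlast
  have h2 : chainCost d (l1 ++ l2) ≤ max (chainCost d l1) (chainCost d l2) :=
    chainCost_append d hd hdd l1 l2 y h12 h21
  have h3 : max (chainCost d l1) (chainCost d l2)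
      ≤ max (minChainCost d x y) (minChainCost d y z) + ε := by
    apply max_le
    · exact le_trans hc1.le (add_le_add_left (le_max_left _ _) ε)
    · exact le_trans hc2.le (add_le_add_left (le_max_right _ _) ε)
  exact le_trans h1 (le_trans h2 h3)

lemma le_chainCost (u : X → X → ℝ) (hu0 : ∀ a, u a a ≤ 0)
    (hultra : ∀ a b c, u a c ≤ max (u a b) (u b c)) :
    ∀ (l : List X) (x z : X), l.head? = some x → l.getLast? = some z → u x z ≤ chainCost u l
  | [], x, z, h1, _ => by simp at h1
  | [a], x, z, h1, h2 => by
    simp only [List.head?_cons, Option.some.injEq] at h1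
    simp only [List.getLast?_singleton, Option.some.injEq] at h2
    subst h1; subst h2
    exact hu0 a
  | a :: b :: t, x, z, h1, h2 => by
    simp only [List.head?_cons, Option.some.injEq] at h1
    subst h1
    have hlast : (b :: t).getLast? = some z := by
      rw [List.getLast?_cons_cons] at h2; exact h2
    have ih := le_chainCost u hu0 hultra (b :: t) b z rfl hlast
    calc u a z ≤ max (u a b) (u b z) := hultra a b z
      _ ≤ max (u a b) (chainCost u (b :: t)) := max_le_max le_rfl ih
      _ = chainCost u (a :: b :: t) := rfl

lemma minChainCost_idem (d : X → X → ℝ) (hd : ∀ a b, 0 ≤ d a b) (hdd : ∀ a, d a a = 0)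
    (x x' : X) :
    minChainCost (fun a b => minChainCost d a b) x x' = minChainCost d x x' := by
  have hc0 : ∀ a b, 0 ≤ minChainCost d a b := fun a b => minChainCost_nonneg d hd a b
  have hcc : ∀ a, minChainCost d a a = 0 := fun a => minChainCost_self d hd a
  apply le_antisymm
  · exact minChainCost_le_d (fun a b => minChainCost d a b) hc0 x x'
  · apply le_csInf (chainSet_nonempty _ x x')
    rintro c ⟨l, h1, h2, rfl⟩
    exact le_chainCost (fun a b => minChainCost d a b) (fun a => (hcc a).le)
      (fun a b c => minChainCost_ultra d hd hdd a b c) l x x' h1 h2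

end Aux

theorem alpha_one_coincide {X : Type*} [Fintype X] [Nonempty X]
    (dlb dub : X → X → ℝ)
    (hsl : ∀ x y, dlb x y = dlb y x) (hsu : ∀ x y, dub x y = dub y x)
    (hbd : ∀ x y, x ≠ y → 0 < dlb x y ∧ dlb x y ≤ dub x y)
    (hdl : ∀ x, dlb x x = 0) (hdu : ∀ x, dub x x = 0)
    (α : ℝ) (hα : α = 1) :
    ∀ x x', uCL dlb dub α x x' = uCO dlb dub α x x' ∧
      uCO dlb dub α x x' = minChainCost dub x x' := by
  subst hα
  have hd : ∀ a b, 0 ≤ dub a b := by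
    intro a b
    by_cases h : a = b
    · subst h; rw [hdu]
    · exact le_of_lt (lt_of_lt_of_le (hbd a b h).1 (hbd a b h).2)
  have hCO : uCO dlb dub 1 = minChainCost dub := by
    unfold uCO; congr 1; funext a b; ring
  have hCL : uCL dlb dub 1 = minChainCost (fun a b => minChainCost dub a b) := by
    unfold uCL; congr 1; funext a b; ring
  intro x x'
  refine ⟨?_, ?_⟩
  · rw [hCO, hCL, minChainCost_idem dub hd hdu x x']
  · rw [hCO]
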